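/- Suppose F and G have finite and equal second moments, i.e. ∫ x² dF(x) = ∫ x² dν(x) < ∞, and that the signed measure ν is supported on the interval [−a, a] for some a > 0. Then the Fourier–Stieltjes transforms f(t) = ∫ e^{itx} dF(x) and g(t) = ∫ e^{itx} dν(x) satisfy |f(t) − g(t)| ≤ 4π a Δ |t| for all t ∈ ℝ. -/

import Mathlib

open MeasureTheory

section Stmt8Aux

open Set
open scoped Classical

noncomputable def stmt8kern (x u : ℝ) : ℝ :=
  (Ioc (0:ℝ) x).indicator 1 u - (Ioc x (0:ℝ)).indicator 1 u

noncomputable def stmt8w (ρ : Measure ℝ) (u : ℝ) : ℝ :=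
  if 0 < u then (ρ (Ici u)).toReal else -((ρ (Iio u)).toReal)

lemma stmt8kern_eq_uIoc (x u : ℝ) :
    stmt8kern x u = if u ∈ Set.uIoc 0 x then (if 0 < u then 1 else -1) else 0 := by
  unfold stmt8kern
  rcases le_total 0 x with h | h
  · rw [Set.uIoc_of_le h]
    simp only [Set.indicator_apply, Set.mem_Ioc]
    split_ifs <;> simp_all <;> linarith
  · rw [Set.uIoc_of_ge h]
    simp only [Set.indicator_apply, Set.mem_Ioc]
    split_ifs <;> simp_all <;> linarith

lemma stmt8kern_meas : Measurable fun p : ℝ × ℝ => stmt8kern p.1 p.2 := by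
  have h1 : MeasurableSet {p : ℝ × ℝ | p.2 ∈ Ioc 0 p.1} :=
    (measurableSet_lt measurable_const measurable_snd).inter
      (measurableSet_le measurable_snd measurable_fst)
  have h2 : MeasurableSet {p : ℝ × ℝ | p.2 ∈ Ioc p.1 0} :=
    (measurableSet_lt measurable_fst measurable_snd).inter
      (measurableSet_le measurable_snd measurable_const)
  unfold stmt8kern
  simp only [Set.indicator_apply]
  exact (Measurable.ite h1 measurable_const measurable_const).sub
    (Measurable.ite h2 measurable_const measurable_const)

lemma stmt8kern_norm {E : Type*} [NormedAddCommGroup E] [NormedSpace ℝ E]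
    (φ : ℝ → E) (x u : ℝ) :
    ‖stmt8kern x u • φ u‖ = (Set.uIoc 0 x).indicator (fun v => ‖φ v‖) u := by
  rw [stmt8kern_eq_uIoc, Set.indicator_apply]
  split_ifs with h1 h2 <;> simp [norm_smul]

lemma stmt8kern_smul {E : Type*} [NormedAddCommGroup E] [NormedSpace ℝ E]
    (φ : ℝ → E) (x u : ℝ) :
    stmt8kern x u • φ u
      = (Set.uIoc 0 x).indicator (fun v => (if 0 < v then (1:ℝ) else -1) • φ v) u := by
  rw [stmt8kern_eq_uIoc, Set.indicator_apply]
  split_ifs with h1 h2 <;> simp_all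

lemma stmt8kern_pos (u : ℝ) (hu : 0 < u) (x : ℝ) :
    stmt8kern x u = (Ici u).indicator 1 x := by
  unfold stmt8kern
  simp only [Set.indicator_apply, Set.mem_Ioc, Set.mem_Ici]
  split_ifs <;> simp_all <;> linarith

lemma stmt8kern_nonpos (u : ℝ) (hu : ¬ 0 < u) (x : ℝ) :
    stmt8kern x u = -((Iio u).indicator 1 x) := by
  unfold stmt8kern
  simp only [Set.indicator_apply, Set.mem_Ioc, Set.mem_Iio]
  split_ifs <;> simp_all <;> linarith

lemma stmt8_inner {E : Type*} [NormedAddCommGroup E] [NormedSpace ℝ E] [CompleteSpace E]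
    (φ : ℝ → E) (x : ℝ) :
    ∫ u, stmt8kern x u • φ u = ∫ u in (0:ℝ)..x, φ u := by
  rcases le_total 0 x with h | h
  · have he : Ioc x (0:ℝ) = ∅ := Ioc_eq_empty (by linarith)
    have heq : ∀ u, stmt8kern x u • φ u = (Ioc (0:ℝ) x).indicator φ u := by
      intro u
      unfold stmt8kern
      simp only [he, Set.indicator_empty, Pi.zero_apply, sub_zero, Set.indicator_apply]
      split_ifs <;> simp_all
    rw [funext heq, integral_indicator measurableSet_Ioc,
      intervalIntegral.integral_of_le h]
  · have he : Ioc (0:ℝ) x = ∅ := Ioc_eq_empty (by linarith)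
    have heq : ∀ u, stmt8kern x u • φ u = -((Ioc x (0:ℝ)).indicator φ u) := by
      intro u
      unfold stmt8kern
      simp only [he, Set.indicator_empty, Pi.zero_apply, zero_sub, Set.indicator_apply]
      split_ifs <;> simp_all
    rw [funext heq, integral_neg, integral_indicator measurableSet_Ioc,
      ← intervalIntegral.integral_of_le h, ← intervalIntegral.integral_symm]

lemma stmt8_fubini {E : Type*} [NormedAddCommGroup E] [NormedSpace ℝ E] [CompleteSpace E]
    [SecondCountableTopology E] [MeasurableSpace E] [BorelSpace E]
    (ρ : Measure ℝ) [IsFiniteMeasure ρ] (φ : ℝ → E) (hφ : Continuous φ)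
    (hint : Integrable (fun x => ∫ u in Set.uIoc 0 x, ‖φ u‖) ρ) :
    Integrable (fun u => stmt8w ρ u • φ u) volume ∧
    ∫ x, (∫ u, stmt8kern x u • φ u) ∂ρ = ∫ u, stmt8w ρ u • φ u := by
  set f : ℝ × ℝ → E := fun p => stmt8kern p.1 p.2 • φ p.2 with hf
  have hmeas : AEStronglyMeasurable f (ρ.prod volume) :=
    (stmt8kern_meas.smul (hφ.measurable.comp measurable_snd)).aestronglyMeasurable
  have hprod : Integrable f (ρ.prod volume) := by
    rw [integrable_prod_iff hmeas]
    constructor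
    · refine Filter.Eventually.of_forall fun x => ?_
      have heq : (fun u => f (x, u))
          = (Set.uIoc 0 x).indicator (fun v => (if 0 < v then (1:ℝ) else -1) • φ v) := by
        funext u; exact stmt8kern_smul φ x u
      rw [heq]
      rw [integrable_indicator_iff measurableSet_uIoc]
      have hb : IntegrableOn (fun v => ‖φ v‖) (Set.uIoc 0 x) volume :=
        (hφ.norm.integrableOn_Icc (a := min 0 x) (b := max 0 x)).mono_set
          Set.Ioc_subset_Icc_self
      refine Integrable.mono' hb ?_ (Filter.Eventually.of_forall fun u => ?_)
      · exact ((Measurable.ite measurableSet_Ioi measurable_const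
          measurable_const).smul hφ.measurable).aestronglyMeasurable
      · rw [norm_smul]; split_ifs <;> simp
    · have heq : (fun x => ∫ u, ‖f (x, u)‖) = fun x => ∫ u in Set.uIoc 0 x, ‖φ u‖ := by
        funext x
        have h2 : (fun u => ‖f (x, u)‖) = (Set.uIoc 0 x).indicator (fun v => ‖φ v‖) := by
          funext u; exact stmt8kern_norm φ x u
        rw [h2, integral_indicator measurableSet_uIoc]
      rw [heq]; exact hint
  have hswap := integral_integral_swap (f := fun x u => stmt8kern x u • φ u) hprod
  have hident : ∀ u, (∫ x, stmt8kern x u • φ u ∂ρ) = stmt8w ρ u • φ u := by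
    intro u
    rw [integral_smul_const]
    congr 1
    unfold stmt8w
    split_ifs with h
    · rw [funext (stmt8kern_pos u h)]
      exact integral_indicator_one measurableSet_Ici
    · rw [funext (stmt8kern_nonpos u h)]
      rw [integral_neg]
      rw [integral_indicator_one measurableSet_Iio]
      rfl
  constructor
  · have := hprod.integral_prod_right
    exact this.congr (Filter.Eventually.of_forall hident)
  · rw [hswap]
    exact integral_congr_ae (Filter.Eventually.of_forall hident)

lemma stmt8_sq_norm (x : ℝ) : ∫ u in Set.uIoc 0 x, ‖(2*u : ℝ)‖ = x ^ 2 := by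
  rcases le_total 0 x with h | h
  · rw [Set.uIoc_of_le h, ← intervalIntegral.integral_of_le h]
    have heq : ∀ u ∈ Set.uIcc (0:ℝ) x, ‖(2*u : ℝ)‖ = 2*u := by
      intro u hu
      rw [Set.uIcc_of_le h] at hu
      rw [Real.norm_eq_abs, abs_of_nonneg (by nlinarith [hu.1])]
    rw [intervalIntegral.integral_congr heq, intervalIntegral.integral_const_mul,
      integral_id]
    ring
  · rw [Set.uIoc_of_ge h, ← intervalIntegral.integral_of_le h]
    have heq : ∀ u ∈ Set.uIcc x (0:ℝ), ‖(2*u : ℝ)‖ = -(2*u) := by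
      intro u hu
      rw [Set.uIcc_of_le h] at hu
      rw [Real.norm_eq_abs, abs_of_nonpos (by nlinarith [hu.2])]
    rw [intervalIntegral.integral_congr heq, intervalIntegral.integral_neg,
      intervalIntegral.integral_const_mul, integral_id]
    ring

lemma stmt8_exp_norm' (t u : ℝ) :
    ‖(Complex.I * t) * Complex.exp (Complex.I * t * u)‖ = |t| := by
  rw [norm_mul]
  have h1 : ‖Complex.I * (t:ℂ)‖ = |t| := by
    simp
  have h2 : ‖Complex.exp (Complex.I * t * u)‖ = 1 := by
    rw [Complex.norm_exp]; simp
  rw [h1, h2, mul_one]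

lemma stmt8_exp_norm (t : ℝ) (x : ℝ) :
    ∫ u in Set.uIoc 0 x, ‖(Complex.I * t) * Complex.exp (Complex.I * t * u)‖ = |t| * |x| := by
  simp only [stmt8_exp_norm']
  rw [setIntegral_const]
  rcases le_total 0 x with h | h
  · rw [Set.uIoc_of_le h, measureReal_def, Real.volume_Ioc, smul_eq_mul]
    rw [ENNReal.toReal_ofReal (by linarith), abs_of_nonneg h]
    ring
  · rw [Set.uIoc_of_ge h, measureReal_def, Real.volume_Ioc, smul_eq_mul]
    rw [ENNReal.toReal_ofReal (by linarith), abs_of_nonpos h]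
    ring

lemma stmt8_abs_int (ρ : Measure ℝ) [IsFiniteMeasure ρ]
    (h2 : Integrable (fun x : ℝ => x ^ 2) ρ) (c : ℝ) :
    Integrable (fun x : ℝ => c * |x|) ρ := by
  refine Integrable.const_mul ?_ c
  refine Integrable.mono' ((integrable_const (1:ℝ)).add h2) ?_
    (Filter.Eventually.of_forall fun x => ?_)
  · exact (measurable_abs).aestronglyMeasurable
  · rw [Real.norm_eq_abs, abs_abs]
    simp only [Pi.add_apply]
    nlinarith [sq_nonneg (|x| - 1), sq_abs x]

lemma stmt8_sq_inner (x : ℝ) : ∫ u in (0:ℝ)..x, (2*u : ℝ) = x ^ 2 := by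
  rw [intervalIntegral.integral_const_mul, integral_id]; ring

lemma stmt8_exp_inner (t : ℝ) (ht : t ≠ 0) (x : ℝ) :
    ∫ u in (0:ℝ)..x, (Complex.I * t) * Complex.exp (Complex.I * t * u)
      = Complex.exp (Complex.I * t * x) - 1 := by
  have hc : Complex.I * (t : ℂ) ≠ 0 := by
    simp [Complex.I_ne_zero, Complex.ofReal_eq_zero, ht]
  rw [intervalIntegral.integral_const_mul]
  rw [integral_exp_mul_complex hc]
  field_simp
  rw [Complex.ofReal_zero, mul_zero, Complex.exp_zero,
    mul_div_cancel_left₀ _ (Complex.ofReal_ne_zero.2 ht)]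

lemma stmt8w_meas (ρ : Measure ℝ) [IsFiniteMeasure ρ] : Measurable (stmt8w ρ) := by
  unfold stmt8w
  refine Measurable.ite measurableSet_Ioi ?_ ?_
  · have h : Antitone fun u : ℝ => (ρ (Ici u)).toReal := fun u v huv =>
      ENNReal.toReal_mono (measure_ne_top ρ _) (measure_mono (Ici_subset_Ici.2 huv))
    exact h.measurable
  · have h : Monotone fun u : ℝ => (ρ (Iio u)).toReal := fun u v huv =>
      ENNReal.toReal_mono (measure_ne_top ρ _) (measure_mono (Iio_subset_Iio huv))
    exact h.measurable.neg

lemma stmt8_Ici (ρ : Measure ℝ) [IsFiniteMeasure ρ] (u : ℝ) :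
    (ρ (Ici u)).toReal = (ρ univ).toReal - (ρ (Iio u)).toReal := by
  have h := measure_add_measure_compl (μ := ρ) (measurableSet_Iio (a := u))
  rw [compl_Iio] at h
  have h2 : (ρ (Iio u)).toReal + (ρ (Ici u)).toReal = (ρ univ).toReal := by
    rw [← ENNReal.toReal_add (measure_ne_top _ _) (measure_ne_top _ _), h]
  linarith

lemma stmt8_Iio_eq_Iic (ρ : Measure ℝ) (u : ℝ) (h : ρ {u} = 0) :
    ρ (Iio u) = ρ (Iic u) := by
  refine le_antisymm (measure_mono Iio_subset_Iic_self) ?_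
  calc ρ (Iic u) = ρ (Iio u ∪ {u}) := by rw [Iio_union_right]
    _ ≤ ρ (Iio u) + ρ {u} := measure_union_le _ _
    _ = ρ (Iio u) := by rw [h, add_zero]

lemma stmt8_ae_atom (ρ : Measure ℝ) [IsFiniteMeasure ρ] :
    ∀ᵐ u : ℝ, ρ {u} = 0 := by
  have hc : Set.Countable {u : ℝ | 0 < ρ {u}} := by
    refine Measure.countable_meas_pos_of_disjoint_iUnion₀ (μ := ρ) (As := fun u : ℝ => {u})
      (fun i => (measurableSet_singleton i).nullMeasurableSet) ?_
    exact fun i j hij => (disjoint_singleton.2 hij).aedisjoint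
  have hz : volume {u : ℝ | 0 < ρ {u}} = 0 := hc.measure_zero volume
  rw [ae_iff]
  convert hz using 2
  ext u
  simp [pos_iff_ne_zero]

end Stmt8Aux

set_option maxHeartbeats 2000000 in
/-- If `F` and `G = ν((-∞,·])` have finite and equal second moments and the signed measure
`ν = ν₁ - ν₂` is supported on `[-a,a]`, then the Fourier–Stieltjes transforms satisfy
`|f(t) - g(t)| ≤ 4π a Δ |t|` for all `t`, where `Δ = sup_x |F(x)-G(x)|`. -/
theorem stmt_8
    (μ : Measure ℝ) [IsProbabilityMeasure μ]
    (ν₁ ν₂ : Measure ℝ) [IsFiniteMeasure ν₁] [IsFiniteMeasure ν₂]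
    (hν : (ν₁ Set.univ).toReal - (ν₂ Set.univ).toReal = 1)
    (F G : ℝ → ℝ)
    (hFdef : ∀ x, F x = (μ (Set.Iic x)).toReal)
    (hGdef : ∀ x, G x = (ν₁ (Set.Iic x)).toReal - (ν₂ (Set.Iic x)).toReal)
    (hμ2 : Integrable (fun x : ℝ => x ^ 2) μ)
    (hν₁2 : Integrable (fun x : ℝ => x ^ 2) ν₁)
    (hν₂2 : Integrable (fun x : ℝ => x ^ 2) ν₂)
    (hmom : ∫ x, x ^ 2 ∂μ = (∫ x, x ^ 2 ∂ν₁) - ∫ x, x ^ 2 ∂ν₂)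
    (Δ : ℝ) (hΔ : Δ = ⨆ x : ℝ, |F x - G x|)
    (a : ℝ) (ha : 0 < a)
    (hsupp : ν₁.restrict (Set.Icc (-a) a)ᶜ = ν₂.restrict (Set.Icc (-a) a)ᶜ)
    (f g : ℝ → ℂ)
    (hfdef : ∀ t : ℝ, f t = ∫ x, Complex.exp (Complex.I * t * x) ∂μ)
    (hgdef : ∀ t : ℝ, g t
      = (∫ x, Complex.exp (Complex.I * t * x) ∂ν₁)
        - ∫ x, Complex.exp (Complex.I * t * x) ∂ν₂) :
    ∀ t : ℝ, ‖f t - g t‖ ≤ 4 * Real.pi * a * Δ * |t| := by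
  intro t
  -- Δ bounds
  have hFGle : ∀ x, |F x - G x| ≤ Δ := by
    intro x
    rw [hΔ]
    refine le_ciSup (f := fun x => |F x - G x|)
      ⟨1 + ((ν₁ Set.univ).toReal + (ν₂ Set.univ).toReal), ?_⟩ x
    rintro y ⟨z, rfl⟩
    have h1 : |F z| ≤ 1 := by
      rw [hFdef, abs_of_nonneg ENNReal.toReal_nonneg]
      have : (μ (Set.Iic z)).toReal ≤ (μ Set.univ).toReal :=
        ENNReal.toReal_mono (measure_ne_top _ _) (measure_mono (Set.subset_univ _))
      simpa using this
    have h2 : |G z| ≤ (ν₁ Set.univ).toReal + (ν₂ Set.univ).toReal := by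
      rw [hGdef]
      refine (abs_sub _ _).trans ?_
      gcongr
      · rw [abs_of_nonneg ENNReal.toReal_nonneg]
        exact ENNReal.toReal_mono (measure_ne_top _ _) (measure_mono (Set.subset_univ _))
      · rw [abs_of_nonneg ENNReal.toReal_nonneg]
        exact ENNReal.toReal_mono (measure_ne_top _ _) (measure_mono (Set.subset_univ _))
    calc |F z - G z| ≤ |F z| + |G z| := abs_sub _ _
      _ ≤ 1 + ((ν₁ Set.univ).toReal + (ν₂ Set.univ).toReal) := by linarith
  have hΔ0 : 0 ≤ Δ := le_trans (abs_nonneg _) (hFGle 0)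
  rcases eq_or_ne t 0 with rfl | ht
  · -- trivial case t = 0
    have hf0 : f 0 = 1 := by
      rw [hfdef]
      simp
    have hg0 : g 0 = 1 := by
      rw [hgdef]
      simp only [Complex.ofReal_zero, mul_zero, zero_mul, Complex.exp_zero]
      rw [integral_const, integral_const]
      rw [Complex.real_smul, Complex.real_smul, mul_one, mul_one]
      rw [← Complex.ofReal_sub]; exact_mod_cast hν
    rw [hf0, hg0, sub_self]
    rw [norm_zero]
    simp
  -- main case t ≠ 0
  have h2a : (0:ℝ) < 2*a := by linarith
  have hcont_sq : Continuous fun u : ℝ => (2:ℝ)*u := by continuity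
  have hcont_exp : Continuous fun u : ℝ =>
      (Complex.I * t) * Complex.exp (Complex.I * t * u) := by
    have : Continuous fun u : ℝ => Complex.I * t * (u:ℂ) := by continuity
    exact continuous_const.mul (Complex.continuous_exp.comp this)
  -- Fubini identity specialised to φ(u) = 2u
  have key_sq : ∀ (ρ : Measure ℝ) [IsFiniteMeasure ρ], Integrable (fun x : ℝ => x^2) ρ →
      (Integrable (fun u => stmt8w ρ u • ((2:ℝ)*u)) volume ∧
        ∫ x, x^2 ∂ρ = ∫ u, stmt8w ρ u • ((2:ℝ)*u)) := by
    intro ρ _ h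
    have hint : Integrable (fun x => ∫ u in Set.uIoc 0 x, ‖(2*u : ℝ)‖) ρ := by
      have heq : (fun x => ∫ u in Set.uIoc 0 x, ‖(2*u:ℝ)‖) = fun x : ℝ => x^2 :=
        funext stmt8_sq_norm
      rw [heq]; exact h
    obtain ⟨h1, h2⟩ := stmt8_fubini ρ (fun u => (2:ℝ)*u) hcont_sq hint
    refine ⟨h1, ?_⟩
    rw [← h2]
    refine integral_congr_ae (Filter.Eventually.of_forall fun x => ?_)
    exact ((stmt8_inner (fun u => (2:ℝ)*u) x).trans (stmt8_sq_inner x)).symm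
  -- integrability of the characteristic integrand
  have hexp_int : ∀ (ρ : Measure ℝ) [IsFiniteMeasure ρ],
      Integrable (fun x : ℝ => Complex.exp (Complex.I*t*x)) ρ := by
    intro ρ _
    refine Integrable.mono' (integrable_const (1:ℝ)) ?_
      (Filter.Eventually.of_forall fun x => ?_)
    · refine Continuous.aestronglyMeasurable ?_
      have : Continuous fun x : ℝ => Complex.I * t * (x:ℂ) := by continuity
      exact Complex.continuous_exp.comp this
    · rw [Complex.norm_exp]
      simp
  -- Fubini identity specialised to φ(u) = i t e^{itu}
  have key_exp : ∀ (ρ : Measure ℝ) [IsFiniteMeasure ρ], Integrable (fun x : ℝ => x^2) ρ →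
      (Integrable (fun u => stmt8w ρ u • ((Complex.I * t) * Complex.exp (Complex.I * t * u)))
          volume ∧
        (∫ x, Complex.exp (Complex.I*t*x) ∂ρ) - ((ρ Set.univ).toReal : ℂ)
          = ∫ u, stmt8w ρ u • ((Complex.I * t) * Complex.exp (Complex.I * t * u))) := by
    intro ρ _ h
    have hint : Integrable (fun x => ∫ (u : ℝ) in Set.uIoc 0 x,
        ‖(Complex.I * t) * Complex.exp (Complex.I * t * u)‖) ρ := by
      have heq : (fun x : ℝ => ∫ (u : ℝ) in Set.uIoc 0 x,
          ‖(Complex.I*t) * Complex.exp (Complex.I*t*u)‖) = fun x : ℝ => |t| * |x| :=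
        funext (stmt8_exp_norm t)
      rw [heq]; exact stmt8_abs_int ρ h |t|
    obtain ⟨h1, h2⟩ := stmt8_fubini ρ
      (fun u => (Complex.I * t) * Complex.exp (Complex.I * t * u)) hcont_exp hint
    refine ⟨h1, ?_⟩
    rw [← h2]
    have e1 : (fun x : ℝ => ∫ u, stmt8kern x u • ((Complex.I * t) * Complex.exp (Complex.I*t*u)))
        = fun x : ℝ => Complex.exp (Complex.I*t*x) - 1 := by
      funext x
      exact (stmt8_inner (fun u => (Complex.I * t) * Complex.exp (Complex.I * t * u)) x).trans
        (stmt8_exp_inner t ht x)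
    rw [e1, integral_sub (hexp_int ρ) (integrable_const 1), integral_const,
      Complex.real_smul, mul_one]
    rfl
  have ksμ := key_sq μ hμ2
  have ksν₁ := key_sq ν₁ hν₁2
  have ksν₂ := key_sq ν₂ hν₂2
  have keμ := key_exp μ hμ2
  have keν₁ := key_exp ν₁ hν₁2
  have keν₂ := key_exp ν₂ hν₂2
  set W : ℝ → ℝ := fun u => stmt8w μ u - stmt8w ν₁ u + stmt8w ν₂ u with hWdef
  set q : ℝ → ℝ := fun u => W u * (2*u) with hqdef
  have hWm : Measurable W := ((stmt8w_meas μ).sub (stmt8w_meas ν₁)).add (stmt8w_meas ν₂)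
  have hq_int : Integrable q volume := by
    refine ((ksμ.1.sub ksν₁.1).add ksν₂.1).congr
      (Filter.Eventually.of_forall fun u => ?_)
    simp only [hqdef, hWdef, smul_eq_mul, Pi.add_apply, Pi.sub_apply]
    ring
  have hq0 : ∫ u, q u = 0 := by
    have e1 : ∫ u, q u = ∫ u, ((stmt8w μ u • ((2:ℝ)*u) - stmt8w ν₁ u • ((2:ℝ)*u))
        + stmt8w ν₂ u • ((2:ℝ)*u)) := by
      refine integral_congr_ae (Filter.Eventually.of_forall fun u => ?_)
      simp only [hqdef, hWdef, smul_eq_mul]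
      ring
    have hsub_int : Integrable
        (fun u => stmt8w μ u • ((2:ℝ)*u) - stmt8w ν₁ u • ((2:ℝ)*u)) volume :=
      ksμ.1.sub ksν₁.1
    rw [e1, integral_add hsub_int ksν₂.1, integral_sub ksμ.1 ksν₁.1,
      ← ksμ.2, ← ksν₁.2, ← ksν₂.2]
    linarith [hmom]
  have e4 : f t - g t = ∫ u, W u • ((Complex.I * t) * Complex.exp (Complex.I * t * u)) := by
    have e5 : ∫ u, W u • ((Complex.I * t) * Complex.exp (Complex.I * t * u))
        = ∫ u, ((stmt8w μ u • ((Complex.I * t) * Complex.exp (Complex.I * t * u))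
          - stmt8w ν₁ u • ((Complex.I * t) * Complex.exp (Complex.I * t * u)))
          + stmt8w ν₂ u • ((Complex.I * t) * Complex.exp (Complex.I * t * u))) := by
      refine integral_congr_ae (Filter.Eventually.of_forall fun u => ?_)
      simp only [hWdef, sub_smul, add_smul]
    have hsub_int : Integrable
        (fun u => stmt8w μ u • ((Complex.I * t) * Complex.exp (Complex.I * t * u))
          - stmt8w ν₁ u • ((Complex.I * t) * Complex.exp (Complex.I * t * u))) volume :=
      keμ.1.sub keν₁.1
    rw [e5, integral_add hsub_int keν₂.1, integral_sub keμ.1 keν₁.1,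
      ← keμ.2, ← keν₁.2, ← keν₂.2, hfdef, hgdef]
    have hμ1 : ((μ Set.univ).toReal : ℂ) = 1 := by simp
    have hν' : ((ν₁ Set.univ).toReal : ℂ) - ((ν₂ Set.univ).toReal : ℂ) = 1 := by
      exact_mod_cast hν
    rw [hμ1]
    linear_combination -hν'
  -- a.e. bound |W| ≤ Δ
  have hWae : ∀ᵐ u : ℝ, |W u| ≤ Δ := by
    filter_upwards [stmt8_ae_atom μ, stmt8_ae_atom ν₁, stmt8_ae_atom ν₂] with u h1 h2 h3
    have l1 : (μ (Set.Iio u)).toReal = F u := by rw [hFdef, stmt8_Iio_eq_Iic μ u h1]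
    have l2 : (ν₁ (Set.Iio u)).toReal = (ν₁ (Set.Iic u)).toReal := by
      rw [stmt8_Iio_eq_Iic ν₁ u h2]
    have l3 : (ν₂ (Set.Iio u)).toReal = (ν₂ (Set.Iic u)).toReal := by
      rw [stmt8_Iio_eq_Iic ν₂ u h3]
    have hWu : W u = G u - F u := by
      simp only [hWdef, stmt8w]
      split_ifs with hu
      · rw [stmt8_Ici μ, stmt8_Ici ν₁, stmt8_Ici ν₂, l1, l2, l3, hGdef]
        have hμ1 : (μ Set.univ).toReal = 1 := by simp
        linarith [hν]
      · rw [l1, l2, l3, hGdef]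
        ring
    rw [hWu, abs_sub_comm]
    exact hFGle u
  -- support facts
  have hsub : ∀ s : Set ℝ, s ⊆ (Set.Icc (-a) a)ᶜ → MeasurableSet s → ν₁ s = ν₂ s := by
    intro s hss hms
    have e1 : ν₁ s = ν₁.restrict (Set.Icc (-a) a)ᶜ s := by
      rw [Measure.restrict_apply hms, Set.inter_eq_left.2 hss]
    have e2 : ν₂ s = ν₂.restrict (Set.Icc (-a) a)ᶜ s := by
      rw [Measure.restrict_apply hms, Set.inter_eq_left.2 hss]
    rw [e1, e2, hsupp]
  have hWpos : ∀ u, a < u → W u = (μ (Set.Ici u)).toReal := by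
    intro u hu
    have h0 : 0 < u := lt_trans ha hu
    have hss : Set.Ici u ⊆ (Set.Icc (-a) a)ᶜ := by
      intro y hy
      simp only [Set.mem_compl_iff, Set.mem_Icc, not_and, not_le]
      intro _
      exact lt_of_lt_of_le hu hy
    simp only [hWdef, stmt8w, if_pos h0]
    rw [hsub _ hss measurableSet_Ici]
    ring
  have hWneg : ∀ u, u < -a → W u = -(μ (Set.Iio u)).toReal := by
    intro u hu
    have h0 : ¬ 0 < u := by simp only [not_lt]; linarith
    have hss : Set.Iio u ⊆ (Set.Icc (-a) a)ᶜ := by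
      intro y hy
      simp only [Set.mem_compl_iff, Set.mem_Icc, not_and, not_le]
      intro hy2
      exfalso
      have : y < -a := lt_trans hy hu
      linarith
    simp only [hWdef, stmt8w, if_neg h0]
    rw [hsub _ hss measurableSet_Iio]
    ring
  set s : Set ℝ := Set.Icc (-a) a with hsdef
  have hs : MeasurableSet s := measurableSet_Icc
  have hvs : (volume s).toReal = 2*a := by
    rw [hsdef, Real.volume_Icc, ENNReal.toReal_ofReal (by linarith)]
    ring
  -- bound on the complement of [-a,a]
  have hbound_c : ∀ u ∈ sᶜ, |W u| ≤ (2*a)⁻¹ * q u := by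
    intro u hu
    have hu' : u < -a ∨ a < u := by
      simp only [hsdef, Set.mem_compl_iff, Set.mem_Icc, not_and, not_le] at hu
      rcases lt_or_ge u (-a) with h | h
      · exact Or.inl h
      · exact Or.inr (hu h)
    rw [inv_mul_eq_div, le_div_iff₀ h2a]
    rcases hu' with h | h
    · have hw := hWneg u h
      have h0 : W u ≤ 0 := by rw [hw]; exact neg_nonpos.2 ENNReal.toReal_nonneg
      rw [abs_of_nonpos h0]
      have hq : q u = W u * (2*u) := rfl
      rw [hq]
      nlinarith [mul_nonneg (neg_nonneg.2 h0) (by linarith : (0:ℝ) ≤ -(2*u) - 2*a)]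
    · have hw := hWpos u h
      have h0 : 0 ≤ W u := by rw [hw]; exact ENNReal.toReal_nonneg
      rw [abs_of_nonneg h0]
      have hq : q u = W u * (2*u) := rfl
      rw [hq]
      nlinarith [mul_nonneg h0 (by linarith : (0:ℝ) ≤ 2*u - 2*a)]
  have hint_c : IntegrableOn (fun u => |W u|) sᶜ volume := by
    refine Integrable.mono' ((hq_int.const_mul (2*a)⁻¹).integrableOn)
      (hWm.abs.aestronglyMeasurable.restrict) ?_
    rw [ae_restrict_iff' hs.compl]
    exact Filter.Eventually.of_forall fun u hu => by
      rw [Real.norm_eq_abs, abs_abs]; exact hbound_c u hu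
  have hint_s : IntegrableOn (fun u => |W u|) s volume := by
    refine Integrable.mono' (g := fun _ : ℝ => Δ) (integrableOn_const ?_)
      (hWm.abs.aestronglyMeasurable.restrict) ?_
    · rw [hsdef, Real.volume_Icc]; exact ENNReal.ofReal_ne_top
    · refine ae_restrict_of_ae ?_
      filter_upwards [hWae] with u hu
      rw [Real.norm_eq_abs, abs_abs]
      exact hu
  have hW_int : Integrable (fun u => |W u|) volume := by
    have hun := hint_s.union hint_c
    rwa [Set.union_compl_self, integrableOn_univ] at hun
  -- central bound
  have hC : ∫ u in s, |W u| ≤ Δ * (2*a) := by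
    have hconst : IntegrableOn (fun _ : ℝ => Δ) s volume := by
      refine integrableOn_const ?_
      rw [hsdef, Real.volume_Icc]; exact ENNReal.ofReal_ne_top
    have step := integral_mono_ae hint_s hconst (ae_restrict_of_ae hWae)
    rw [setIntegral_const, smul_eq_mul, measureReal_def, hvs] at step
    linarith
  -- tail bound
  have hT : ∫ u in sᶜ, |W u| ≤ 2*a*Δ := by
    have step1 : ∫ u in sᶜ, |W u| ≤ ∫ u in sᶜ, (2*a)⁻¹ * q u :=
      integral_mono_ae hint_c ((hq_int.const_mul (2*a)⁻¹).integrableOn)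
        ((ae_restrict_iff' hs.compl).2 (Filter.Eventually.of_forall hbound_c))
    have step2 : ∫ u in sᶜ, (2*a)⁻¹ * q u = (2*a)⁻¹ * ∫ u in sᶜ, q u :=
      integral_const_mul _ _
    have step3 : ∫ u in sᶜ, q u = (∫ u, q u) - ∫ u in s, q u := by
      have := integral_add_compl hs hq_int
      linarith
    have hqb : ∀ᵐ u ∂(volume.restrict s), ‖q u‖ ≤ Δ * (2*a) := by
      filter_upwards [ae_restrict_of_ae hWae, ae_restrict_mem hs] with u h1 h2
      rw [hsdef] at h2
      have h2' := Set.mem_Icc.1 h2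
      have habs : |2*u| ≤ 2*a := by
        rw [abs_le]; constructor <;> nlinarith [h2'.1, h2'.2]
      have hqe : q u = W u * (2*u) := rfl
      rw [Real.norm_eq_abs, hqe, abs_mul]
      exact mul_le_mul h1 habs (abs_nonneg _) hΔ0
    have step4 : |∫ u in s, q u| ≤ (Δ * (2*a)) * (2*a) := by
      have h5 : ‖∫ u in s, q u‖ ≤ ∫ u in s, ‖q u‖ := norm_integral_le_integral_norm _
      have hconst : IntegrableOn (fun _ : ℝ => Δ * (2*a)) s volume := by
        refine integrableOn_const ?_
        rw [hsdef, Real.volume_Icc]; exact ENNReal.ofReal_ne_top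
      have h6 : ∫ u in s, ‖q u‖ ≤ ∫ u in s, Δ * (2*a) :=
        integral_mono_ae hq_int.norm.integrableOn hconst hqb
      rw [setIntegral_const, smul_eq_mul, measureReal_def, hvs] at h6
      rw [← Real.norm_eq_abs]
      nlinarith [h5, h6]
    calc ∫ u in sᶜ, |W u| ≤ (2*a)⁻¹ * ∫ u in sᶜ, q u := by rw [← step2]; exact step1
      _ = (2*a)⁻¹ * (0 - ∫ u in s, q u) := by rw [step3, hq0]
      _ ≤ (2*a)⁻¹ * ((Δ * (2*a)) * (2*a)) := by
          refine mul_le_mul_of_nonneg_left ?_ (inv_nonneg.2 h2a.le)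
          have := neg_le_abs (∫ u in s, q u)
          linarith [step4]
      _ = 2*a*Δ := by field_simp
  have hWtot : ∫ u, |W u| ≤ Δ*(2*a) + 2*a*Δ := by
    rw [← integral_add_compl hs hW_int]
    exact add_le_add hC hT
  calc ‖f t - g t‖
      = ‖∫ u, W u • ((Complex.I * t) * Complex.exp (Complex.I * t * u))‖ := by
        rw [e4]
    _ ≤ ∫ u, ‖W u • ((Complex.I * t) * Complex.exp (Complex.I * t * u))‖ :=
        norm_integral_le_integral_norm _
    _ = ∫ u, |W u| * |t| := by
        refine integral_congr_ae (Filter.Eventually.of_forall fun u => ?_)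
        simp only [norm_smul, Real.norm_eq_abs, stmt8_exp_norm']
    _ = (∫ u, |W u|) * |t| := integral_mul_const _ _
    _ ≤ (Δ*(2*a) + 2*a*Δ) * |t| := mul_le_mul_of_nonneg_right hWtot (abs_nonneg t)
    _ ≤ 4 * Real.pi * a * Δ * |t| := by
        nlinarith [Real.pi_gt_three, abs_nonneg t, hΔ0, ha.le,
          mul_nonneg (mul_nonneg ha.le hΔ0) (abs_nonneg t)]
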